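/- arXiv:2112.05177 — 2 statements merged into one kernel-verified Lean document; each statement's English description precedes it below -/
import Mathlib

section
/- If (A, ρ̄) is a symmetric right partial H-comodule algebra and the antipode S of H is bijective, then the left coinvariants equal the right coinvariants: A^{coH} = A^{coH,r}. -/
open TensorProduct LinearMap

noncomputable section

variable (k : Type*) [Field k]
variable (H : Type*) [Ring H] [HopfAlgebra k H]
variable (A : Type*) [Ring A] [Algebra k A]

/-- A left partial action of a Hopf algebra `H` on an algebra `A` (Caenepeel–Janssen):
(PA1) `h·(ab) = (h₁·a)(h₂·b)`, (PA2) `1·a = a`, (PA3) `h·(g·a) = (h₁·1)((h₂g)·a)`. -/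
structure PartialAction where
  act : H →ₗ[k] A →ₗ[k] A
  pa1 : ∀ a b : A, act.flip (a * b) =
    LinearMap.mul' k A ∘ₗ TensorProduct.map (act.flip a) (act.flip b) ∘ₗ Coalgebra.comul
  pa2 : ∀ a : A, act 1 a = a
  pa3 : ∀ (g : H) (a : A), act.flip (act g a) =
    LinearMap.mul' k A ∘ₗ
      TensorProduct.map (act.flip 1) ((act.flip a) ∘ₗ LinearMap.mulRight k g) ∘ₗ Coalgebra.comul

variable {k H A}

/-- (PA4): the partial action is symmetric: `h·(g·a) = ((h₁g)·a)(h₂·1)`. -/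
def PartialAction.IsSymmetric (α : PartialAction k H A) : Prop :=
  ∀ (g : H) (a : A), α.act.flip (α.act g a) =
    LinearMap.mul' k A ∘ₗ
      TensorProduct.map ((α.act.flip a) ∘ₗ LinearMap.mulRight k g) (α.act.flip 1) ∘ₗ
        Coalgebra.comul

/-- Left invariants `A^H`. -/
def PartialAction.leftInv (α : PartialAction k H A) : Set A :=
  {a | ∀ h : H, α.act h a = a * α.act h 1}

/-- Right invariants `A^{H,r}`. -/
def PartialAction.rightInv (α : PartialAction k H A) : Set A :=
  {a | ∀ h : H, α.act h a = α.act h 1 * a}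

/-- `t` is a left integral in `H`. -/
def IsLeftIntegral (t : H) : Prop := ∀ h : H, h * t = Coalgebra.counit (R := k) h • t

/-- `t` is a right integral in `H`. -/
def IsRightIntegral (t : H) : Prop := ∀ h : H, t * h = Coalgebra.counit (R := k) h • t

/-- Convolution product on the dual `H* = H →ₗ[k] k`. -/
def conv (f g : H →ₗ[k] k) : H →ₗ[k] k :=
  LinearMap.mul' k k ∘ₗ TensorProduct.map f g ∘ₗ Coalgebra.comul

/-- `T ∈ H*` is a right integral: `T ∗ f = f(1) T`. -/
def IsRightIntegralDual (T : H →ₗ[k] k) : Prop := ∀ f : H →ₗ[k] k, conv T f = f 1 • T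

/-- `T ∈ H*` is a left integral: `f ∗ T = f(1) T`. -/
def IsLeftIntegralDual (T : H →ₗ[k] k) : Prop := ∀ f : H →ₗ[k] k, conv f T = f 1 • T

namespace PartialAction

variable (α : PartialAction k H A)

/-- `ψ (h ⊗ b) = Σ (h₁·b) ⊗ h₂`. -/
def psi : H ⊗[k] A →ₗ[k] A ⊗[k] H :=
  TensorProduct.map (TensorProduct.lift α.act) LinearMap.id
    ∘ₗ (TensorProduct.assoc k H A H).symm.toLinearMap
    ∘ₗ TensorProduct.map LinearMap.id (TensorProduct.comm k H A).toLinearMap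
    ∘ₗ (TensorProduct.assoc k H H A).toLinearMap
    ∘ₗ TensorProduct.map Coalgebra.comul LinearMap.id

/-- The smash product multiplication on `A ⊗ H`:
`(a # h)(b # g) = a(h₁·b) # h₂g`, as a linear map on the tensor square. -/
def smashMul' : (A ⊗[k] H) ⊗[k] (A ⊗[k] H) →ₗ[k] A ⊗[k] H :=
  TensorProduct.map (LinearMap.mul' k A) (LinearMap.mul' k H)
    ∘ₗ (TensorProduct.assoc k A A (H ⊗[k] H)).symm.toLinearMap
    ∘ₗ TensorProduct.map LinearMap.id
        ((TensorProduct.assoc k A H H).toLinearMap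
          ∘ₗ TensorProduct.map α.psi LinearMap.id
          ∘ₗ (TensorProduct.assoc k H A H).symm.toLinearMap)
    ∘ₗ (TensorProduct.assoc k A H (A ⊗[k] H)).toLinearMap

/-- The smash product multiplication, curried. -/
def sm : (A ⊗[k] H) →ₗ[k] (A ⊗[k] H) →ₗ[k] A ⊗[k] H := TensorProduct.curry α.smashMul'

/-- `1 # 1`. -/
def unit : A ⊗[k] H := (1 : A) ⊗ₜ[k] (1 : H)

/-- `j x = x · (1 # 1)`; the element `a #̲ h` of the partial smash product. -/
def j : A ⊗[k] H →ₗ[k] A ⊗[k] H := α.sm.flip (unit)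

/-- The partial smash product `A #̲ H`, as a subspace of `A ⊗ H`. -/
def smash : Submodule k (A ⊗[k] H) := LinearMap.range α.j

/-- The action of `A # H` on `A`: `(a # h) ▸ b = a (h·b)`. -/
def act2 : A ⊗[k] H →ₗ[k] A →ₗ[k] A :=
  TensorProduct.curry (LinearMap.mul' k A
    ∘ₗ TensorProduct.map LinearMap.id (TensorProduct.lift α.act)
    ∘ₗ (TensorProduct.assoc k A H A).toLinearMap)

end PartialAction

/-- `Φ(a # h) = a T(h)`. -/
def PhiMap (T : H →ₗ[k] k) : A ⊗[k] H →ₗ[k] A :=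
  (TensorProduct.rid k A).toLinearMap ∘ₗ TensorProduct.map LinearMap.id T

/-- `θ(f) = f(t₁) t₂`. -/
def thetaMap (t : H) : (H →ₗ[k] k) →ₗ[k] H :=
  (TensorProduct.lid k H).toLinearMap
    ∘ₗ LinearMap.applyₗ (Coalgebra.comul (R := k) t)
    ∘ₗ (TensorProduct.mapBilinear (σ₁₂ := RingHom.id k) (M := H) (N := H) (M₂ := k) (N₂ := H)).flip LinearMap.id

section HopfAux

variable {k : Type*} [Field k] {H : Type*} [Ring H] [HopfAlgebra k H]

open Coalgebra

lemma antipode_one' : (HopfAlgebra.antipode (R := k) (A := H)) (1 : H) = 1 := by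
  have := HopfAlgebra.mul_antipode_rTensor_comul_apply (R := k) (A := H) (a := 1)
  simpa [Algebra.TensorProduct.one_def] using this


lemma counit_smul_right_sum' (h : H) (r : Coalgebra.Repr k h (H × H)) :
    ∑ i ∈ r.index, Coalgebra.counit (R := k) (r.left i) • r.right i = h := by
  have := Coalgebra.sum_counit_tmul_eq r
  apply_fun (TensorProduct.lid k H) at this
  simpa only [map_sum, TensorProduct.lid_tmul, one_smul] using this

lemma counit_smul_left_sum' (h : H) (r : Coalgebra.Repr k h (H × H)) :
    ∑ i ∈ r.index, Coalgebra.counit (R := k) (r.right i) • r.left i = h := by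
  have := Coalgebra.sum_tmul_counit_eq r
  apply_fun (TensorProduct.rid k H) at this
  simpa only [map_sum, TensorProduct.rid_tmul, one_smul] using this

lemma collapse_sum' (b : H) (rb : Coalgebra.Repr k b (H × H))
    (rL : (j : rb.ι) → Coalgebra.Repr k (rb.left j) (H × H)) :
    ∑ j ∈ rb.index, ∑ q ∈ (rL j).index,
      ((rL j).left q) ⊗ₜ[k] ((rL j).right q * (HopfAlgebra.antipode (R := k) (A := H)) (rb.right j)) =
      b ⊗ₜ[k] (1 : H) := by
  have E := Coalgebra.sum_tmul_tmul_eq rb rL (fun j => ℛ k (rb.right j))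
  apply_fun (LinearMap.lTensor H (LinearMap.mul' k H ∘ₗ LinearMap.lTensor H (HopfAlgebra.antipode (R := k) (A := H)))) at E
  simp only [map_sum, LinearMap.lTensor_tmul, LinearMap.coe_comp, Function.comp_apply,
    LinearMap.mul'_apply] at E
  rw [E]
  have h1 : ∀ j ∈ rb.index,
      ∑ q ∈ (ℛ k (rb.right j)).index,
        rb.left j ⊗ₜ[k] ((ℛ k (rb.right j)).left q * (HopfAlgebra.antipode (R := k) (A := H)) ((ℛ k (rb.right j)).right q)) =
      Coalgebra.counit (R := k) (rb.right j) • (rb.left j ⊗ₜ[k] (1 : H)) := by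
    intro j _
    rw [← TensorProduct.tmul_sum, HopfAlgebra.sum_mul_antipode_eq_smul (ℛ k (rb.right j))]
    rw [TensorProduct.tmul_smul]
  rw [Finset.sum_congr rfl h1]
  have h2 : ∀ j ∈ rb.index, Coalgebra.counit (R := k) (rb.right j) • (rb.left j ⊗ₜ[k] (1:H)) =
      (Coalgebra.counit (R := k) (rb.right j) • rb.left j) ⊗ₜ[k] (1:H) := by
    intro j _; rw [TensorProduct.smul_tmul']
  rw [Finset.sum_congr rfl h2, ← TensorProduct.sum_tmul, counit_smul_left_sum']

lemma antipode_mul_sum' (c d : H) (rc : Coalgebra.Repr k c (H × H)) (rd : Coalgebra.Repr k d (H × H)) :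
    ∑ p ∈ rc.index, ∑ q ∈ rd.index,
      (HopfAlgebra.antipode (R := k) (A := H)) (rc.left p * rd.left q) * (rc.right p * rd.right q) =
    (Coalgebra.counit (R := k) c * Coalgebra.counit (R := k) d) • (1 : H) := by
  classical
  have heq : ∑ x ∈ rc.index ×ˢ rd.index,
      (rc.left x.1 * rd.left x.2) ⊗ₜ[k] (rc.right x.1 * rd.right x.2)
      = Coalgebra.comul (R := k) (c * d) := by
    rw [Bialgebra.comul_mul, ← rc.eq, ← rd.eq, Finset.sum_mul_sum]
    rw [Finset.sum_product]
    simp [Algebra.TensorProduct.tmul_mul_tmul]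
  let r : Coalgebra.Repr k (c*d) _ := ⟨rc.index ×ˢ rd.index,
    fun x => rc.left x.1 * rd.left x.2, fun x => rc.right x.1 * rd.right x.2, heq⟩
  have h := HopfAlgebra.sum_antipode_mul_eq_smul r
  rw [Bialgebra.counit_mul] at h
  rw [Finset.sum_product] at h
  exact h

lemma antipode_mul' (a b : H) : (HopfAlgebra.antipode (R := k) (A := H)) (a * b) = (HopfAlgebra.antipode (R := k) (A := H)) b * (HopfAlgebra.antipode (R := k) (A := H)) a := by
  classical
  set ra := ℛ k a with hra
  set rb := ℛ k b with hrb
  set rLa : (i : ra.ι) → Coalgebra.Repr k (ra.left i) (H × H) := fun i => ℛ k (ra.left i) with hrLa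
  set rLb : (j : rb.ι) → Coalgebra.Repr k (rb.left j) (H × H) := fun j => ℛ k (rb.left j) with hrLb
  have stepA : ∑ i ∈ ra.index, ∑ p ∈ (rLa i).index, ∑ j ∈ rb.index, ∑ q ∈ (rLb j).index,
      (HopfAlgebra.antipode (R := k) (A := H)) ((rLa i).left p * (rLb j).left q) *
        ((rLa i).right p * (((rLb j).right q * (HopfAlgebra.antipode (R := k) (A := H)) (rb.right j)) * (HopfAlgebra.antipode (R := k) (A := H)) (ra.right i)))
      = (HopfAlgebra.antipode (R := k) (A := H)) (a * b) := by
    have inner : ∀ i ∈ ra.index, ∀ p ∈ (rLa i).index,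
        ∑ j ∈ rb.index, ∑ q ∈ (rLb j).index,
          (HopfAlgebra.antipode (R := k) (A := H)) ((rLa i).left p * (rLb j).left q) *
            ((rLa i).right p * (((rLb j).right q * (HopfAlgebra.antipode (R := k) (A := H)) (rb.right j)) * (HopfAlgebra.antipode (R := k) (A := H)) (ra.right i)))
        = (HopfAlgebra.antipode (R := k) (A := H)) ((rLa i).left p * b) * ((rLa i).right p * (HopfAlgebra.antipode (R := k) (A := H)) (ra.right i)) := by
      intro i _ p _
      have E := congrArg (LinearMap.mul' k H ∘ₗ
        TensorProduct.map ((HopfAlgebra.antipode (R := k) (A := H)) ∘ₗ LinearMap.mulLeft k ((rLa i).left p))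
          (LinearMap.mulLeft k ((rLa i).right p) ∘ₗ LinearMap.mulRight k ((HopfAlgebra.antipode (R := k) (A := H)) (ra.right i))))
        (collapse_sum' b rb rLb)
      simp only [map_sum, LinearMap.coe_comp, Function.comp_apply, TensorProduct.map_tmul,
        LinearMap.mul'_apply, LinearMap.mulLeft_apply, LinearMap.mulRight_apply, one_mul] at E
      exact E
    rw [Finset.sum_congr rfl (fun i hi => Finset.sum_congr rfl (fun p hp => inner i hi p hp))]
    have E2 := congrArg (LinearMap.mul' k H ∘ₗ
      TensorProduct.map ((HopfAlgebra.antipode (R := k) (A := H)) ∘ₗ LinearMap.mulRight k b) (LinearMap.id))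
      (collapse_sum' a ra rLa)
    simp only [map_sum, LinearMap.coe_comp, Function.comp_apply, TensorProduct.map_tmul,
      LinearMap.mul'_apply, LinearMap.mulRight_apply, LinearMap.id_coe, id_eq, mul_one] at E2
    exact E2
  have stepB : ∑ i ∈ ra.index, ∑ p ∈ (rLa i).index, ∑ j ∈ rb.index, ∑ q ∈ (rLb j).index,
      (HopfAlgebra.antipode (R := k) (A := H)) ((rLa i).left p * (rLb j).left q) *
        ((rLa i).right p * (((rLb j).right q * (HopfAlgebra.antipode (R := k) (A := H)) (rb.right j)) * (HopfAlgebra.antipode (R := k) (A := H)) (ra.right i)))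
      = (HopfAlgebra.antipode (R := k) (A := H)) b * (HopfAlgebra.antipode (R := k) (A := H)) a := by
    have reassoc : ∀ (i : ra.ι) (p : (rLa i).ι) (j : rb.ι) (q : (rLb j).ι),
        (HopfAlgebra.antipode (R := k) (A := H)) ((rLa i).left p * (rLb j).left q) *
          ((rLa i).right p * (((rLb j).right q * (HopfAlgebra.antipode (R := k) (A := H)) (rb.right j)) * (HopfAlgebra.antipode (R := k) (A := H)) (ra.right i)))
        = ((HopfAlgebra.antipode (R := k) (A := H)) ((rLa i).left p * (rLb j).left q) * ((rLa i).right p * (rLb j).right q)) *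
            ((HopfAlgebra.antipode (R := k) (A := H)) (rb.right j) * (HopfAlgebra.antipode (R := k) (A := H)) (ra.right i)) := by
      intro i p j q; simp only [mul_assoc]
    calc ∑ i ∈ ra.index, ∑ p ∈ (rLa i).index, ∑ j ∈ rb.index, ∑ q ∈ (rLb j).index,
          (HopfAlgebra.antipode (R := k) (A := H)) ((rLa i).left p * (rLb j).left q) *
            ((rLa i).right p * (((rLb j).right q * (HopfAlgebra.antipode (R := k) (A := H)) (rb.right j)) * (HopfAlgebra.antipode (R := k) (A := H)) (ra.right i)))
        = ∑ i ∈ ra.index, ∑ j ∈ rb.index,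
            (∑ p ∈ (rLa i).index, ∑ q ∈ (rLb j).index,
              (HopfAlgebra.antipode (R := k) (A := H)) ((rLa i).left p * (rLb j).left q) * ((rLa i).right p * (rLb j).right q)) *
              ((HopfAlgebra.antipode (R := k) (A := H)) (rb.right j) * (HopfAlgebra.antipode (R := k) (A := H)) (ra.right i)) := by
          refine Finset.sum_congr rfl (fun i _ => ?_)
          rw [Finset.sum_comm]
          refine Finset.sum_congr rfl (fun j _ => ?_)
          rw [Finset.sum_mul]
          refine Finset.sum_congr rfl (fun p _ => ?_)
          rw [Finset.sum_mul]
          exact Finset.sum_congr rfl (fun q _ => reassoc i p j q)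
      _ = ∑ i ∈ ra.index, ∑ j ∈ rb.index,
            (Coalgebra.counit (R := k) (ra.left i) * Coalgebra.counit (R := k) (rb.left j)) •
              ((HopfAlgebra.antipode (R := k) (A := H)) (rb.right j) * (HopfAlgebra.antipode (R := k) (A := H)) (ra.right i)) := by
          refine Finset.sum_congr rfl (fun i _ => Finset.sum_congr rfl (fun j _ => ?_))
          rw [antipode_mul_sum' (ra.left i) (rb.left j) (rLa i) (rLb j), smul_mul_assoc, one_mul]
      _ = (HopfAlgebra.antipode (R := k) (A := H)) b * (HopfAlgebra.antipode (R := k) (A := H)) a := by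
          rw [Finset.sum_comm]
          have : ∀ j ∈ rb.index, ∀ i ∈ ra.index,
              (Coalgebra.counit (R := k) (ra.left i) * Coalgebra.counit (R := k) (rb.left j)) •
                ((HopfAlgebra.antipode (R := k) (A := H)) (rb.right j) * (HopfAlgebra.antipode (R := k) (A := H)) (ra.right i))
              = (Coalgebra.counit (R := k) (rb.left j) • (HopfAlgebra.antipode (R := k) (A := H)) (rb.right j)) *
                  (Coalgebra.counit (R := k) (ra.left i) • (HopfAlgebra.antipode (R := k) (A := H)) (ra.right i)) := by
            intro j _ i _
            rw [smul_mul_smul_comm, mul_comm]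
          rw [Finset.sum_congr rfl (fun j hj => Finset.sum_congr rfl (fun i hi => this j hj i hi))]
          have hb : ∑ j ∈ rb.index, Coalgebra.counit (R := k) (rb.left j) • (HopfAlgebra.antipode (R := k) (A := H)) (rb.right j) = (HopfAlgebra.antipode (R := k) (A := H)) b := by
            rw [Finset.sum_congr rfl
              (fun j _ => (map_smul (HopfAlgebra.antipode (R := k) (A := H)) (Coalgebra.counit (R := k) (rb.left j)) (rb.right j)).symm),
              ← map_sum, counit_smul_right_sum' b rb]
          have ha : ∑ i ∈ ra.index, Coalgebra.counit (R := k) (ra.left i) • (HopfAlgebra.antipode (R := k) (A := H)) (ra.right i) = (HopfAlgebra.antipode (R := k) (A := H)) a := by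
            rw [Finset.sum_congr rfl
              (fun i _ => (map_smul (HopfAlgebra.antipode (R := k) (A := H)) (Coalgebra.counit (R := k) (ra.left i)) (ra.right i)).symm),
              ← map_sum, counit_smul_right_sum' a ra]
          rw [← Finset.sum_mul_sum, hb, ha]
  exact stepA.symm.trans stepB

lemma sinv_mul_sum (hS : Function.Bijective (HopfAlgebra.antipode (R := k) (A := H))) (h : H)
    (r : Coalgebra.Repr k h (H × H)) :
    ∑ i ∈ r.index,
      ((LinearEquiv.ofBijective (HopfAlgebra.antipode (R := k)) hS).symm : H →ₗ[k] H)
        (r.right i) * r.left i =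
    Coalgebra.counit (R := k) h • (1 : H) := by
  apply hS.injective
  rw [map_sum]
  have key : ∀ i ∈ r.index,
      (HopfAlgebra.antipode (R := k) (A := H))
        (((LinearEquiv.ofBijective (HopfAlgebra.antipode (R := k)) hS).symm : H →ₗ[k] H)
          (r.right i) * r.left i) =
      (HopfAlgebra.antipode (R := k) (A := H)) (r.left i) * r.right i := by
    intro i _
    rw [antipode_mul']
    congr 1
    exact (LinearEquiv.ofBijective (HopfAlgebra.antipode (R := k)) hS).apply_symm_apply
      (r.right i)
  rw [Finset.sum_congr rfl key, HopfAlgebra.sum_antipode_mul_eq_smul r, map_smul, antipode_one']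


end HopfAux

section Coaction

variable (k : Type*) [Field k]
variable (H : Type*) [Ring H] [HopfAlgebra k H]
variable (A : Type*) [Ring A] [Algebra k A]

/-- A right partial `H`-comodule algebra (Caenepeel–Janssen):
(PCA1) `ρ(ab) = ρ(a)ρ(b)`, (PCA2) `a⁰⁰ ⊗ a⁰¹ ⊗ a¹ = a⁰1⁰ ⊗ a¹₁1¹ ⊗ a¹₂`,
(PCA3) `ε(a¹) a⁰ = a`. -/
structure PartialCoaction where
  rho : A →ₗ[k] A ⊗[k] H
  pca1 : ∀ a b : A, rho (a * b) = rho a * rho b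
  pca2 : ∀ a : A,
    TensorProduct.map rho LinearMap.id (rho a) =
      ((TensorProduct.assoc k A H H).symm
          (TensorProduct.map LinearMap.id Coalgebra.comul (rho a)))
        * ((rho 1) ⊗ₜ (1 : H))
  pca3 : ∀ a : A,
    (TensorProduct.rid k A) (TensorProduct.map LinearMap.id Coalgebra.counit (rho a)) = a

variable {k H A}

/-- (PCA4): the partial coaction is symmetric:
`a⁰⁰ ⊗ a⁰¹ ⊗ a¹ = 1⁰a⁰ ⊗ 1¹a¹₁ ⊗ a¹₂`. -/
def PartialCoaction.IsSymmetric (P : PartialCoaction k H A) : Prop :=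
  ∀ a : A,
    TensorProduct.map P.rho LinearMap.id (P.rho a) =
      ((P.rho 1) ⊗ₜ (1 : H)) *
        ((TensorProduct.assoc k A H H).symm
          (TensorProduct.map LinearMap.id Coalgebra.comul (P.rho a)))

/-- `w ⊗ h ↦ w * (1 ⊗ T h)`. -/
def rmulMap (T : H →ₗ[k] H) : (A ⊗[k] H) ⊗[k] H →ₗ[k] A ⊗[k] H :=
  TensorProduct.lift <| LinearMap.mk₂ k (fun w h => w * ((1:A) ⊗ₜ[k] T h))
    (fun w w' h => by rw [add_mul])
    (fun c w h => by rw [smul_mul_assoc])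
    (fun w h h' => by rw [map_add, TensorProduct.tmul_add, mul_add])
    (fun c w h => by rw [map_smul, TensorProduct.tmul_smul, mul_smul_comm])

/-- `w ⊗ h ↦ (1 ⊗ T h) * w`. -/
def lmulMap (T : H →ₗ[k] H) : (A ⊗[k] H) ⊗[k] H →ₗ[k] A ⊗[k] H :=
  TensorProduct.lift <| LinearMap.mk₂ k (fun w h => ((1:A) ⊗ₜ[k] T h) * w)
    (fun w w' h => by rw [mul_add])
    (fun c w h => by rw [mul_smul_comm])
    (fun w h h' => by rw [map_add, TensorProduct.tmul_add, add_mul])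
    (fun c w h => by rw [map_smul, TensorProduct.tmul_smul, smul_mul_assoc])

@[simp] lemma rmulMap_tmul (T : H →ₗ[k] H) (w : A ⊗[k] H) (h : H) :
    rmulMap T (w ⊗ₜ[k] h) = w * ((1:A) ⊗ₜ[k] T h) := rfl

@[simp] lemma lmulMap_tmul (T : H →ₗ[k] H) (w : A ⊗[k] H) (h : H) :
    lmulMap T (w ⊗ₜ[k] h) = ((1:A) ⊗ₜ[k] T h) * w := rfl

/-- `h ↦ ε(h) 1`. -/
def ceps : H →ₗ[k] H := (Algebra.linearMap k H) ∘ₗ Coalgebra.counit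

lemma rmulMap_one_mul (T : H →ₗ[k] H) (v : A ⊗[k] H) (y : (A ⊗[k] H) ⊗[k] H) :
    rmulMap T ((v ⊗ₜ[k] (1:H)) * y) = v * rmulMap T y := by
  have : (rmulMap (A := A) T) ∘ₗ LinearMap.mulLeft k (v ⊗ₜ[k] (1:H)) =
      LinearMap.mulLeft k v ∘ₗ rmulMap T := by
    apply TensorProduct.ext'
    intro w h
    simp only [LinearMap.coe_comp, Function.comp_apply, LinearMap.mulLeft_apply,
      Algebra.TensorProduct.tmul_mul_tmul, one_mul, rmulMap_tmul, mul_assoc]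
  simpa using LinearMap.congr_fun this y

lemma lmulMap_mul_one (T : H →ₗ[k] H) (v : A ⊗[k] H) (y : (A ⊗[k] H) ⊗[k] H) :
    lmulMap T (y * (v ⊗ₜ[k] (1:H))) = lmulMap T y * v := by
  have : (lmulMap (A := A) T) ∘ₗ LinearMap.mulRight k (v ⊗ₜ[k] (1:H)) =
      LinearMap.mulRight k v ∘ₗ lmulMap T := by
    apply TensorProduct.ext'
    intro w h
    simp only [LinearMap.coe_comp, Function.comp_apply, LinearMap.mulRight_apply,
      Algebra.TensorProduct.tmul_mul_tmul, mul_one, lmulMap_tmul, mul_assoc]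
  simpa using LinearMap.congr_fun this y

lemma rmulMap_comul (x : A ⊗[k] H) :
    rmulMap (HopfAlgebra.antipode (R := k))
      ((TensorProduct.assoc k A H H).symm (TensorProduct.map LinearMap.id Coalgebra.comul x)) =
    TensorProduct.map LinearMap.id (ceps (k := k) (H := H)) x := by
  have : (rmulMap (A := A) (HopfAlgebra.antipode (R := k))) ∘ₗ
      ((TensorProduct.assoc k A H H).symm.toLinearMap) ∘ₗ
      (TensorProduct.map LinearMap.id Coalgebra.comul) =
      TensorProduct.map LinearMap.id (ceps (k := k) (H := H)) := by
    apply TensorProduct.ext'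
    intro c h
    simp only [LinearMap.coe_comp, Function.comp_apply, TensorProduct.map_tmul,
      LinearMap.id_coe, id_eq, LinearEquiv.coe_coe]
    have aux : ∀ z : H ⊗[k] H,
        rmulMap (A := A) (HopfAlgebra.antipode (R := k))
          ((TensorProduct.assoc k A H H).symm (c ⊗ₜ[k] z)) =
        c ⊗ₜ[k] (LinearMap.mul' k H
          (LinearMap.lTensor H (HopfAlgebra.antipode (R := k)) z)) := by
      intro z
      have heq : (rmulMap (A := A) (HopfAlgebra.antipode (R := k))) ∘ₗ
          ((TensorProduct.assoc k A H H).symm.toLinearMap) ∘ₗ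
          ((TensorProduct.mk k A (H ⊗[k] H)) c) =
          ((TensorProduct.mk k A H) c) ∘ₗ (LinearMap.mul' k H) ∘ₗ
            (LinearMap.lTensor H (HopfAlgebra.antipode (R := k))) := by
        apply TensorProduct.ext'
        intro g g'
        simp only [LinearMap.coe_comp, Function.comp_apply, TensorProduct.mk_apply,
          LinearEquiv.coe_coe, TensorProduct.assoc_symm_tmul, rmulMap_tmul,
          LinearMap.lTensor_tmul, LinearMap.mul'_apply,
          Algebra.TensorProduct.tmul_mul_tmul, mul_one]
      exact LinearMap.congr_fun heq z
    rw [aux (Coalgebra.comul h), HopfAlgebra.mul_antipode_lTensor_comul_apply]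
    rfl
  exact LinearMap.congr_fun this x

open Coalgebra in
lemma lmulMap_comul (hS : Function.Bijective (HopfAlgebra.antipode (R := k) (A := H)))
    (x : A ⊗[k] H) :
    lmulMap ((LinearEquiv.ofBijective (HopfAlgebra.antipode (R := k)) hS).symm : H →ₗ[k] H)
      ((TensorProduct.assoc k A H H).symm (TensorProduct.map LinearMap.id Coalgebra.comul x)) =
    TensorProduct.map LinearMap.id (ceps (k := k) (H := H)) x := by
  set T : H →ₗ[k] H :=
    ((LinearEquiv.ofBijective (HopfAlgebra.antipode (R := k)) hS).symm : H →ₗ[k] H) with hT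
  have : (lmulMap (A := A) T) ∘ₗ
      ((TensorProduct.assoc k A H H).symm.toLinearMap) ∘ₗ
      (TensorProduct.map LinearMap.id Coalgebra.comul) =
      TensorProduct.map LinearMap.id (ceps (k := k) (H := H)) := by
    apply TensorProduct.ext'
    intro c h
    simp only [LinearMap.coe_comp, Function.comp_apply, TensorProduct.map_tmul,
      LinearMap.id_coe, id_eq, LinearEquiv.coe_coe]
    have aux : ∀ z : H ⊗[k] H,
        lmulMap (A := A) T ((TensorProduct.assoc k A H H).symm (c ⊗ₜ[k] z)) =
        c ⊗ₜ[k] (LinearMap.mul' k H (TensorProduct.map T LinearMap.id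
          ((TensorProduct.comm k H H) z))) := by
      intro z
      have heq : (lmulMap (A := A) T) ∘ₗ
          ((TensorProduct.assoc k A H H).symm.toLinearMap) ∘ₗ
          ((TensorProduct.mk k A (H ⊗[k] H)) c) =
          ((TensorProduct.mk k A H) c) ∘ₗ (LinearMap.mul' k H) ∘ₗ
            (TensorProduct.map T LinearMap.id) ∘ₗ (TensorProduct.comm k H H).toLinearMap := by
        apply TensorProduct.ext'
        intro g g'
        simp only [LinearMap.coe_comp, Function.comp_apply, TensorProduct.mk_apply,
          LinearEquiv.coe_coe, TensorProduct.assoc_symm_tmul, lmulMap_tmul,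
          TensorProduct.comm_tmul, TensorProduct.map_tmul, LinearMap.mul'_apply,
          LinearMap.id_coe, id_eq, Algebra.TensorProduct.tmul_mul_tmul, one_mul]
      exact LinearMap.congr_fun heq z
    rw [aux (Coalgebra.comul h)]
    congr 1
    have hr := (ℛ k h).eq
    rw [← hr, map_sum, map_sum, map_sum]
    have hterm : ∀ i ∈ (ℛ k h).index,
        LinearMap.mul' k H (TensorProduct.map T LinearMap.id
          ((TensorProduct.comm k H H) ((ℛ k h).left i ⊗ₜ[k] (ℛ k h).right i))) =
        T ((ℛ k h).right i) * (ℛ k h).left i := by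
      intro i _
      rw [TensorProduct.comm_tmul, TensorProduct.map_tmul, LinearMap.mul'_apply]
      rfl
    rw [Finset.sum_congr rfl hterm, hT]
    rw [sinv_mul_sum hS h (ℛ k h)]
    rw [ceps, LinearMap.comp_apply, Algebra.linearMap_apply, Algebra.algebraMap_eq_smul_one]
  exact LinearMap.congr_fun this x

lemma map_ceps_rho (P : PartialCoaction k H A) (c : A) :
    TensorProduct.map LinearMap.id (ceps (k := k) (H := H)) (P.rho c) = c ⊗ₜ[k] (1:H) := by
  have key : TensorProduct.map (LinearMap.id : A →ₗ[k] A) (ceps (k := k) (H := H)) =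
      ((TensorProduct.mk k A H).flip (1:H)) ∘ₗ (TensorProduct.rid k A).toLinearMap ∘ₗ
        TensorProduct.map LinearMap.id Coalgebra.counit := by
    apply TensorProduct.ext'
    intro b h
    simp only [TensorProduct.map_tmul, LinearMap.id_coe, id_eq, LinearMap.coe_comp,
      Function.comp_apply, LinearEquiv.coe_coe, TensorProduct.rid_tmul, LinearMap.flip_apply,
      TensorProduct.mk_apply, ceps, Algebra.linearMap_apply, Algebra.algebraMap_eq_smul_one,
      TensorProduct.tmul_smul, TensorProduct.smul_tmul', map_smul]
  rw [key, LinearMap.comp_apply, LinearMap.comp_apply, LinearEquiv.coe_coe, P.pca3,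
    LinearMap.flip_apply, TensorProduct.mk_apply]

lemma map_rho_mul_left (P : PartialCoaction k H A) (c : A) (y : A ⊗[k] H) :
    TensorProduct.map P.rho LinearMap.id ((c ⊗ₜ[k] (1:H)) * y) =
      (P.rho c ⊗ₜ[k] (1:H)) * TensorProduct.map P.rho LinearMap.id y := by
  have : (TensorProduct.map P.rho LinearMap.id) ∘ₗ LinearMap.mulLeft k (c ⊗ₜ[k] (1:H)) =
      LinearMap.mulLeft k (P.rho c ⊗ₜ[k] (1:H)) ∘ₗ TensorProduct.map P.rho LinearMap.id := by
    apply TensorProduct.ext'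
    intro b h
    simp only [LinearMap.coe_comp, Function.comp_apply, LinearMap.mulLeft_apply,
      Algebra.TensorProduct.tmul_mul_tmul, one_mul, TensorProduct.map_tmul,
      LinearMap.id_coe, id_eq, P.pca1]
  simpa using LinearMap.congr_fun this y

lemma map_rho_mul_right (P : PartialCoaction k H A) (c : A) (y : A ⊗[k] H) :
    TensorProduct.map P.rho LinearMap.id (y * (c ⊗ₜ[k] (1:H))) =
      TensorProduct.map P.rho LinearMap.id y * (P.rho c ⊗ₜ[k] (1:H)) := by
  have : (TensorProduct.map P.rho LinearMap.id) ∘ₗ LinearMap.mulRight k (c ⊗ₜ[k] (1:H)) =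
      LinearMap.mulRight k (P.rho c ⊗ₜ[k] (1:H)) ∘ₗ TensorProduct.map P.rho LinearMap.id := by
    apply TensorProduct.ext'
    intro b h
    simp only [LinearMap.coe_comp, Function.comp_apply, LinearMap.mulRight_apply,
      Algebra.TensorProduct.tmul_mul_tmul, mul_one, TensorProduct.map_tmul,
      LinearMap.id_coe, id_eq, P.pca1]
  simpa using LinearMap.congr_fun this y


/-- for a symmetric right partial `H`-comodule algebra with bijective
antipode, the left coinvariants equal the right coinvariants. -/
theorem coinvariants_left_eq_right (P : PartialCoaction k H A)
    (hS : Function.Bijective (HopfAlgebra.antipode (R := k) (A := H)))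
    (hsym : P.IsSymmetric) :
    {a : A | P.rho a = (a ⊗ₜ (1 : H)) * P.rho 1} =
      {a : A | P.rho a = P.rho 1 * (a ⊗ₜ (1 : H))} := by
  have lemA : ∀ c : A,
      rmulMap (HopfAlgebra.antipode (R := k))
        (TensorProduct.map P.rho LinearMap.id (P.rho c)) = P.rho 1 * (c ⊗ₜ[k] (1:H)) := by
    intro c
    rw [hsym c, rmulMap_one_mul, rmulMap_comul, map_ceps_rho]
  have lemB : ∀ c : A,
      lmulMap ((LinearEquiv.ofBijective (HopfAlgebra.antipode (R := k)) hS).symm : H →ₗ[k] H)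
        (TensorProduct.map P.rho LinearMap.id (P.rho c)) = (c ⊗ₜ[k] (1:H)) * P.rho 1 := by
    intro c
    rw [P.pca2 c, lmulMap_mul_one, lmulMap_comul hS, map_ceps_rho]
  ext a
  simp only [Set.mem_setOf_eq]
  constructor
  · intro ha
    have h1 := lemA a
    have h2 : rmulMap (HopfAlgebra.antipode (R := k))
        (TensorProduct.map P.rho LinearMap.id (P.rho a)) = P.rho a := by
      conv_lhs => rw [ha, map_rho_mul_left, rmulMap_one_mul, lemA 1,
        ← Algebra.TensorProduct.one_def, mul_one, ← P.pca1, mul_one]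
    rw [← h2, h1]
  · intro ha
    have h1 := lemB a
    have h2 : lmulMap ((LinearEquiv.ofBijective (HopfAlgebra.antipode (R := k)) hS).symm : H →ₗ[k] H)
        (TensorProduct.map P.rho LinearMap.id (P.rho a)) = P.rho a := by
      conv_lhs => rw [ha, map_rho_mul_right, lmulMap_mul_one, lemB 1,
        ← Algebra.TensorProduct.one_def, one_mul, ← P.pca1, one_mul]
    rw [← h2, h1]

end Coaction

end
end

section
/- Let H be a finite-dimensional Hopf algebra, T a left integral in H* and t a right integral in H with T(t) = 1. Then t₁T(t₂S(h)) = h for all h ∈ H. -/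
open TensorProduct LinearMap
set_option maxHeartbeats 1000000
set_option synthInstance.maxHeartbeats 400000

noncomputable section

variable (k : Type*) [Field k]
variable (H : Type*) [Ring H] [HopfAlgebra k H]
variable (A : Type*) [Ring A] [Algebra k A]

variable {k H A}

section Aux7
open Coalgebra HopfAlgebra Bialgebra

variable {K : Type*} [Field K] {B : Type*} [Ring B] [HopfAlgebra K B]
variable {ι ι' : Type*}

private def Wm : B →ₗ[K] B ⊗[K] B :=
  TensorProduct.map (antipode (R := K)) (antipode (R := K)) ∘ₗ
    (TensorProduct.comm K B B).toLinearMap ∘ₗ Coalgebra.comul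

private lemma Wm_apply {c : B} (r : Coalgebra.Repr K c ι) :
    Wm c = ∑ i ∈ r.index,
      antipode (R := K) (r.right i) ⊗ₜ[K] antipode (R := K) (r.left i) := by
  simp only [Wm, LinearMap.coe_comp, Function.comp_apply, LinearEquiv.coe_coe]
  rw [← r.eq, map_sum, map_sum]
  simp [TensorProduct.comm_tmul, TensorProduct.map_tmul]

private lemma sum_counit_smul {c : B} (r : Coalgebra.Repr K c ι) :
    ∑ i ∈ r.index, counit (R := K) (r.left i) • r.right i = c := by
  have := congrArg (TensorProduct.lid K B) (Coalgebra.sum_counit_tmul_eq (R := K) r)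
  simp only [map_sum, TensorProduct.lid_tmul, one_smul] at this
  exact this

private lemma sum_smul_counit {c : B} (r : Coalgebra.Repr K c ι) :
    ∑ i ∈ r.index, counit (R := K) (r.right i) • r.left i = c := by
  have := congrArg (TensorProduct.rid K B) (Coalgebra.sum_tmul_counit_eq (R := K) r)
  simp only [map_sum, TensorProduct.rid_tmul, one_smul] at this
  exact this

private def Gmap (x : B) : (B ⊗[K] B) ⊗[K] B →ₗ[K] B ⊗[K] B :=
  TensorProduct.map (LinearMap.mulLeft K x ∘ₗ antipode (R := K))
      (LinearMap.mul' K B ∘ₗ LinearMap.lTensor B (antipode (R := K))) ∘ₗ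
    (TensorProduct.comm K (B ⊗[K] B) B).toLinearMap

private lemma Gmap_tmul (x α₁ α₂ w : B) :
    Gmap x ((α₁ ⊗ₜ[K] α₂) ⊗ₜ[K] w)
      = (x * antipode (R := K) w) ⊗ₜ[K] (α₁ * antipode (R := K) α₂) := by
  simp [Gmap, TensorProduct.comm_tmul, TensorProduct.map_tmul, LinearMap.mul'_apply]

private lemma IBlem (x : B) {z : B} (rz : Coalgebra.Repr K z ι) :
    ∑ b ∈ rz.index, (x ⊗ₜ[K] rz.left b) * Wm (rz.right b)
      = (x * antipode (R := K) z) ⊗ₜ[K] (1 : B) := by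
  have key : ∑ b ∈ rz.index, (x ⊗ₜ[K] rz.left b) * Wm (rz.right b)
      = Gmap x ((Coalgebra.comul (R := K) (A := B)).rTensor B
          (Coalgebra.comul (R := K) z)) := by
    rw [← Coalgebra.coassoc_symm_apply, ← rz.eq, map_sum, map_sum, map_sum]
    refine Finset.sum_congr rfl fun b _ => ?_
    rw [LinearMap.lTensor_tmul, Wm_apply (ℛ K (rz.right b)), ← (ℛ K (rz.right b)).eq,
      TensorProduct.tmul_sum, map_sum, map_sum, Finset.mul_sum]
    refine Finset.sum_congr rfl fun c _ => ?_
    rw [TensorProduct.assoc_symm_tmul, Gmap_tmul,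
      Algebra.TensorProduct.tmul_mul_tmul]
  rw [key, ← rz.eq, map_sum, map_sum]
  have step : ∀ b ∈ rz.index,
      Gmap x ((Coalgebra.comul (R := K) (A := B)).rTensor B
          (rz.left b ⊗ₜ[K] rz.right b))
        = counit (R := K) (rz.left b) • ((x * antipode (R := K) (rz.right b)) ⊗ₜ[K] (1 : B)) := by
    intro b _
    rw [LinearMap.rTensor_tmul, ← (ℛ K (rz.left b)).eq, TensorProduct.sum_tmul, map_sum]
    have : ∀ c ∈ (ℛ K (rz.left b)).index,
        Gmap x (((ℛ K (rz.left b)).left c ⊗ₜ[K] (ℛ K (rz.left b)).right c) ⊗ₜ[K] rz.right b)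
          = (x * antipode (R := K) (rz.right b)) ⊗ₜ[K]
              ((ℛ K (rz.left b)).left c * antipode (R := K) ((ℛ K (rz.left b)).right c)) :=
      fun c _ => Gmap_tmul _ _ _ _
    rw [Finset.sum_congr rfl this, ← TensorProduct.tmul_sum,
      HopfAlgebra.sum_mul_antipode_eq_smul (ℛ K (rz.left b)), TensorProduct.tmul_smul]
  rw [Finset.sum_congr rfl step]
  have : ∀ b ∈ rz.index,
      counit (R := K) (rz.left b) • ((x * antipode (R := K) (rz.right b)) ⊗ₜ[K] (1 : B))
        = (x * antipode (R := K) (counit (R := K) (rz.left b) • rz.right b)) ⊗ₜ[K] (1 : B) := by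
    intro b _
    rw [map_smul, mul_smul_comm, TensorProduct.smul_tmul']
  rw [Finset.sum_congr rfl this, ← TensorProduct.sum_tmul]
  rw [show (∑ b ∈ rz.index, x * antipode (R := K) (counit (R := K) (rz.left b) • rz.right b))
      = x * antipode (R := K) (∑ b ∈ rz.index, counit (R := K) (rz.left b) • rz.right b) by
    rw [← Finset.mul_sum, ← map_sum]]
  rw [_root_.sum_counit_smul rz]

private def Dmap : (B ⊗[K] B) ⊗[K] B →ₗ[K] B ⊗[K] B :=
  LinearMap.mul' K (B ⊗[K] B) ∘ₗ TensorProduct.map LinearMap.id Wm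

private lemma Dmap_tmul (a : B ⊗[K] B) (w : B) : Dmap (a ⊗ₜ[K] w) = a * Wm w := by
  simp [Dmap, LinearMap.mul'_apply]

private lemma SUBlem {y : B} (ry : Coalgebra.Repr K y ι) :
    ∑ m ∈ ry.index, Coalgebra.comul (R := K) (ry.left m) * Wm (ry.right m)
      = counit (R := K) y • ((1 : B) ⊗ₜ[K] (1 : B)) := by
  have key : ∑ m ∈ ry.index, Coalgebra.comul (R := K) (ry.left m) * Wm (ry.right m)
      = Dmap ((Coalgebra.comul (R := K) (A := B)).rTensor B
          (Coalgebra.comul (R := K) y)) := by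
    rw [← ry.eq, map_sum, map_sum]
    exact Finset.sum_congr rfl fun m _ => by rw [LinearMap.rTensor_tmul, Dmap_tmul]
  rw [key, ← Coalgebra.coassoc_symm_apply, ← ry.eq, map_sum, map_sum, map_sum]
  have step : ∀ m ∈ ry.index,
      Dmap ((TensorProduct.assoc K B B B).symm
        ((LinearMap.lTensor B (Coalgebra.comul (R := K) (A := B)))
          (ry.left m ⊗ₜ[K] ry.right m)))
      = (ry.left m * antipode (R := K) (ry.right m)) ⊗ₜ[K] (1 : B) := by
    intro m _
    rw [LinearMap.lTensor_tmul, ← (ℛ K (ry.right m)).eq, TensorProduct.tmul_sum,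
      map_sum, map_sum]
    have : ∀ b ∈ (ℛ K (ry.right m)).index,
        Dmap ((TensorProduct.assoc K B B B).symm
          (ry.left m ⊗ₜ[K] ((ℛ K (ry.right m)).left b ⊗ₜ[K] (ℛ K (ry.right m)).right b)))
        = (ry.left m ⊗ₜ[K] (ℛ K (ry.right m)).left b) * Wm ((ℛ K (ry.right m)).right b) := by
      intro b _
      rw [TensorProduct.assoc_symm_tmul, Dmap_tmul]
    rw [Finset.sum_congr rfl this, IBlem (ry.left m) (ℛ K (ry.right m))]
  rw [Finset.sum_congr rfl step, ← TensorProduct.sum_tmul,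
    HopfAlgebra.sum_mul_antipode_eq_smul ry, TensorProduct.smul_tmul']

private def Pmap : B ⊗[K] (B ⊗[K] B) →ₗ[K] B ⊗[K] B :=
  LinearMap.mul' K (B ⊗[K] B) ∘ₗ
    TensorProduct.map (Coalgebra.comul ∘ₗ antipode (R := K))
      (LinearMap.mul' K (B ⊗[K] B) ∘ₗ TensorProduct.map Coalgebra.comul Wm)

private lemma Pmap_tmul (a b c : B) :
    Pmap (a ⊗ₜ[K] (b ⊗ₜ[K] c))
      = Coalgebra.comul (R := K) (antipode (R := K) a)
          * (Coalgebra.comul (R := K) b * Wm c) := by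
  simp [Pmap, TensorProduct.map_tmul, LinearMap.mul'_apply]

private lemma comul_antipode {g : B} (r : Coalgebra.Repr K g ι) :
    Coalgebra.comul (R := K) (antipode (R := K) g)
      = ∑ i ∈ r.index, antipode (R := K) (r.right i) ⊗ₜ[K] antipode (R := K) (r.left i) := by
  rw [← Wm_apply r]
  have way2 : Pmap ((LinearMap.lTensor B (Coalgebra.comul (R := K) (A := B)))
        (Coalgebra.comul (R := K) g))
      = Coalgebra.comul (R := K) (antipode (R := K) g) := by
    rw [← (ℛ K g).eq, map_sum, map_sum]
    have step : ∀ m ∈ (ℛ K g).index,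
        Pmap ((LinearMap.lTensor B (Coalgebra.comul (R := K) (A := B)))
            ((ℛ K g).left m ⊗ₜ[K] (ℛ K g).right m))
        = counit (R := K) ((ℛ K g).right m) •
            Coalgebra.comul (R := K) (antipode (R := K) ((ℛ K g).left m)) := by
      intro m _
      rw [LinearMap.lTensor_tmul, ← (ℛ K ((ℛ K g).right m)).eq, TensorProduct.tmul_sum,
        map_sum]
      have : ∀ b ∈ (ℛ K ((ℛ K g).right m)).index,
          Pmap ((ℛ K g).left m ⊗ₜ[K]
            ((ℛ K ((ℛ K g).right m)).left b ⊗ₜ[K] (ℛ K ((ℛ K g).right m)).right b))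
          = Coalgebra.comul (R := K) (antipode (R := K) ((ℛ K g).left m)) *
              (Coalgebra.comul (R := K) ((ℛ K ((ℛ K g).right m)).left b) *
                Wm ((ℛ K ((ℛ K g).right m)).right b)) :=
        fun b _ => Pmap_tmul _ _ _
      rw [Finset.sum_congr rfl this, ← Finset.mul_sum, SUBlem (ℛ K ((ℛ K g).right m)),
        mul_smul_comm, ← Algebra.TensorProduct.one_def, mul_one]
    rw [Finset.sum_congr rfl step]
    have : ∀ m ∈ (ℛ K g).index,
        counit (R := K) ((ℛ K g).right m) •
            Coalgebra.comul (R := K) (antipode (R := K) ((ℛ K g).left m))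
        = Coalgebra.comul (R := K)
            (antipode (R := K) (counit (R := K) ((ℛ K g).right m) • (ℛ K g).left m)) := by
      intro m _; rw [map_smul, map_smul]
    rw [Finset.sum_congr rfl this, ← map_sum, ← map_sum, sum_smul_counit (ℛ K g)]
  have way1 : Pmap ((TensorProduct.assoc K B B B)
        ((Coalgebra.comul (R := K) (A := B)).rTensor B (Coalgebra.comul (R := K) g)))
      = Wm g := by
    rw [← (ℛ K g).eq, map_sum, map_sum, map_sum]
    have step : ∀ j ∈ (ℛ K g).index,
        Pmap ((TensorProduct.assoc K B B B)
          ((Coalgebra.comul (R := K) (A := B)).rTensor B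
            ((ℛ K g).left j ⊗ₜ[K] (ℛ K g).right j)))
        = counit (R := K) ((ℛ K g).left j) • Wm ((ℛ K g).right j) := by
      intro j _
      rw [LinearMap.rTensor_tmul, ← (ℛ K ((ℛ K g).left j)).eq, TensorProduct.sum_tmul,
        map_sum, map_sum]
      have : ∀ l ∈ (ℛ K ((ℛ K g).left j)).index,
          Pmap ((TensorProduct.assoc K B B B)
            (((ℛ K ((ℛ K g).left j)).left l ⊗ₜ[K] (ℛ K ((ℛ K g).left j)).right l)
              ⊗ₜ[K] (ℛ K g).right j))
          = Coalgebra.comul (R := K)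
              (antipode (R := K) ((ℛ K ((ℛ K g).left j)).left l) *
                (ℛ K ((ℛ K g).left j)).right l) * Wm ((ℛ K g).right j) := by
        intro l _
        rw [TensorProduct.assoc_tmul, Pmap_tmul, ← mul_assoc, ← Bialgebra.comul_mul]
      rw [Finset.sum_congr rfl this, ← Finset.sum_mul, ← map_sum,
        HopfAlgebra.sum_antipode_mul_eq_smul (ℛ K ((ℛ K g).left j)),
        map_smul, Bialgebra.comul_one, smul_mul_assoc, one_mul]
    rw [Finset.sum_congr rfl step]
    have : ∀ j ∈ (ℛ K g).index,
        counit (R := K) ((ℛ K g).left j) • Wm (K := K) ((ℛ K g).right j)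
        = Wm (K := K) (counit (R := K) ((ℛ K g).left j) • (ℛ K g).right j) := by
      intro j _; rw [map_smul]
    rw [Finset.sum_congr rfl this, ← map_sum, _root_.sum_counit_smul (ℛ K g)]
  rw [← way2, ← Coalgebra.coassoc_apply, way1]

private lemma counit_antipode (g : B) :
    counit (R := K) (antipode (R := K) g) = counit (R := K) g := by
  have h1 := congrArg (counit (R := K)) (HopfAlgebra.sum_antipode_mul_eq_algebraMap_counit (ℛ K g))
  simp only [map_sum, Bialgebra.counit_mul, Bialgebra.counit_algebraMap] at h1
  calc counit (R := K) (antipode (R := K) g)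
      = counit (R := K) (antipode (R := K)
          (∑ i ∈ (ℛ K g).index, counit (R := K) ((ℛ K g).right i) • (ℛ K g).left i)) := by
        rw [sum_smul_counit (ℛ K g)]
    _ = ∑ i ∈ (ℛ K g).index,
          counit (R := K) (antipode (R := K) ((ℛ K g).left i))
            * counit (R := K) ((ℛ K g).right i) := by
        rw [map_sum, map_sum]
        exact Finset.sum_congr rfl fun i _ => by
          rw [map_smul, map_smul, smul_eq_mul, mul_comm]
    _ = counit (R := K) g := h1


private lemma factA {T : B →ₗ[K] K} (hT : IsLeftIntegralDual T) {a : B}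
    (r : Coalgebra.Repr K a ι) :
    ∑ i ∈ r.index, T (r.right i) • r.left i = T a • (1 : B) := by
  rw [← sub_eq_zero, ← Module.forall_dual_apply_eq_zero_iff K]
  intro f
  have h1 := congrFun (congrArg DFunLike.coe (hT f)) a
  simp only [conv, LinearMap.coe_comp, Function.comp_apply, LinearMap.smul_apply,
    smul_eq_mul] at h1
  rw [← r.eq, map_sum, map_sum] at h1
  simp only [TensorProduct.map_tmul, LinearMap.mul'_apply] at h1
  simp only [map_sub, map_sum, map_smul, smul_eq_mul]
  rw [sub_eq_zero]
  calc ∑ i ∈ r.index, T (r.right i) * f (r.left i)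
      = ∑ i ∈ r.index, f (r.left i) * T (r.right i) :=
        Finset.sum_congr rfl fun i _ => mul_comm _ _
    _ = f 1 * T a := h1
    _ = T a * f 1 := mul_comm _ _

private lemma factA' {T : B →ₗ[K] K} (hT : IsLeftIntegralDual T) {a b : B}
    (ra : Coalgebra.Repr K a ι) (rb : Coalgebra.Repr K b ι') :
    ∑ i ∈ ra.index, ∑ j ∈ rb.index,
      T (ra.right i * rb.right j) • (ra.left i * rb.left j) = T (a * b) • (1 : B) := by
  have hrepr : ∑ p ∈ ra.index ×ˢ rb.index,
      (ra.left p.1 * rb.left p.2) ⊗ₜ[K] (ra.right p.1 * rb.right p.2)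
        = Coalgebra.comul (R := K) (a * b) := by
    rw [Bialgebra.comul_mul, ← ra.eq, ← rb.eq, Finset.sum_mul_sum, Finset.sum_product]
    simp [Algebra.TensorProduct.tmul_mul_tmul]
  have h := factA hT (⟨ra.index ×ˢ rb.index, fun p => ra.left p.1 * rb.left p.2,
    fun p => ra.right p.1 * rb.right p.2, hrepr⟩ : Coalgebra.Repr K (a * b) _)
  simpa [Finset.sum_product] using h

private lemma main_formula {T : B →ₗ[K] K} {t : B} (hT : IsLeftIntegralDual T)
    (ht : IsRightIntegral (k := K) t) (hTt : T t = 1)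
    (rt : Coalgebra.Repr K t ι) (h : B) :
    ∑ i ∈ rt.index, T (rt.right i * antipode (R := K) h) • rt.left i = h := by
  classical
  set S : B →ₗ[K] B := antipode (R := K) with hS
  set Pl : B →ₗ[K] B := ∑ i ∈ rt.index,
    ((T ∘ₗ LinearMap.mulLeft K (rt.right i) ∘ₗ S).smulRight (rt.left i)) with hPl
  have Pl_apply : ∀ x : B, Pl x = ∑ i ∈ rt.index, T (rt.right i * S x) • rt.left i := by
    intro x
    simp [hPl, LinearMap.sum_apply, LinearMap.smulRight_apply, LinearMap.mulLeft_apply]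
  set inner2 : B ⊗[K] B →ₗ[K] B := ∑ i ∈ rt.index,
    ((TensorProduct.lid K B).toLinearMap ∘ₗ
      TensorProduct.map (T ∘ₗ LinearMap.mulLeft K (rt.right i) ∘ₗ S)
        (LinearMap.mulLeft K (rt.left i) ∘ₗ S)) with hinner
  have inner2_apply : ∀ x y : B, inner2 (x ⊗ₜ[K] y)
      = ∑ i ∈ rt.index, T (rt.right i * S x) • (rt.left i * S y) := by
    intro x y
    simp [hinner, LinearMap.sum_apply, TensorProduct.map_tmul, TensorProduct.lid_tmul,
      LinearMap.mulLeft_apply]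
  set Om : B ⊗[K] (B ⊗[K] B) →ₗ[K] B :=
    LinearMap.mul' K B ∘ₗ TensorProduct.map inner2 LinearMap.id ∘ₗ
      (TensorProduct.assoc K B B B).symm.toLinearMap with hOm
  have Om_apply : ∀ x y z : B, Om (x ⊗ₜ[K] (y ⊗ₜ[K] z)) = inner2 (x ⊗ₜ[K] y) * z := by
    intro x y z
    simp [hOm, TensorProduct.assoc_symm_tmul, TensorProduct.map_tmul, LinearMap.mul'_apply]
  have stepA : Pl h = Om ((LinearMap.lTensor B (Coalgebra.comul (R := K) (A := B)))
      (Coalgebra.comul (R := K) h)) := by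
    conv_lhs => rw [← sum_smul_counit (ℛ K h)]
    rw [map_sum, ← (ℛ K h).eq, map_sum, map_sum]
    refine Finset.sum_congr rfl fun j _ => ?_
    rw [LinearMap.lTensor_tmul, ← (ℛ K ((ℛ K h).right j)).eq, TensorProduct.tmul_sum,
      map_sum, map_smul]
    have hR : ∀ m ∈ (ℛ K ((ℛ K h).right j)).index,
        Om ((ℛ K h).left j ⊗ₜ[K]
            ((ℛ K ((ℛ K h).right j)).left m ⊗ₜ[K] (ℛ K ((ℛ K h).right j)).right m))
        = ∑ i ∈ rt.index, T (rt.right i * S ((ℛ K h).left j)) •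
            (rt.left i * (S ((ℛ K ((ℛ K h).right j)).left m)
              * (ℛ K ((ℛ K h).right j)).right m)) := by
      intro m _
      rw [Om_apply, inner2_apply, Finset.sum_mul]
      exact Finset.sum_congr rfl fun i _ => by rw [smul_mul_assoc, mul_assoc]
    rw [Finset.sum_congr rfl hR, Finset.sum_comm, Pl_apply, Finset.smul_sum]
    refine Finset.sum_congr rfl fun i _ => ?_
    rw [← Finset.smul_sum, ← Finset.mul_sum,
      HopfAlgebra.sum_antipode_mul_eq_smul (ℛ K ((ℛ K h).right j)),
      mul_smul_comm, mul_one, smul_comm]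
  have goal1 : Pl h = h := by
    rw [stepA, ← Coalgebra.coassoc_apply, ← (ℛ K h).eq, map_sum, map_sum, map_sum]
    have step : ∀ j ∈ (ℛ K h).index,
        Om ((TensorProduct.assoc K B B B)
          ((Coalgebra.comul (R := K) (A := B)).rTensor B
            ((ℛ K h).left j ⊗ₜ[K] (ℛ K h).right j)))
        = counit (R := K) ((ℛ K h).left j) • (ℛ K h).right j := by
      intro j _
      rw [LinearMap.rTensor_tmul, ← (ℛ K ((ℛ K h).left j)).eq, TensorProduct.sum_tmul,
        map_sum, map_sum]
      have h2 : ∀ l ∈ (ℛ K ((ℛ K h).left j)).index,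
          Om ((TensorProduct.assoc K B B B)
            (((ℛ K ((ℛ K h).left j)).left l ⊗ₜ[K] (ℛ K ((ℛ K h).left j)).right l)
              ⊗ₜ[K] (ℛ K h).right j))
          = inner2 ((ℛ K ((ℛ K h).left j)).left l ⊗ₜ[K] (ℛ K ((ℛ K h).left j)).right l)
              * (ℛ K h).right j := by
        intro l _
        rw [TensorProduct.assoc_tmul, Om_apply]
      rw [Finset.sum_congr rfl h2, ← Finset.sum_mul]
      have hK : ∑ l ∈ (ℛ K ((ℛ K h).left j)).index,
          inner2 ((ℛ K ((ℛ K h).left j)).left l ⊗ₜ[K] (ℛ K ((ℛ K h).left j)).right l)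
          = T (t * S ((ℛ K h).left j)) • (1 : B) := by
        have hfa := factA' hT rt
          (⟨(ℛ K ((ℛ K h).left j)).index,
           fun l => S ((ℛ K ((ℛ K h).left j)).right l),
           fun l => S ((ℛ K ((ℛ K h).left j)).left l),
           (comul_antipode (ℛ K ((ℛ K h).left j))).symm⟩ :
             Coalgebra.Repr K (S ((ℛ K h).left j)) _)
        rw [Finset.sum_comm] at hfa
        calc ∑ l ∈ (ℛ K ((ℛ K h).left j)).index,
            inner2 ((ℛ K ((ℛ K h).left j)).left l ⊗ₜ[K] (ℛ K ((ℛ K h).left j)).right l)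
            = ∑ l ∈ (ℛ K ((ℛ K h).left j)).index, ∑ i ∈ rt.index,
                T (rt.right i * S ((ℛ K ((ℛ K h).left j)).left l)) •
                  (rt.left i * S ((ℛ K ((ℛ K h).left j)).right l)) :=
              Finset.sum_congr rfl fun l _ => inner2_apply _ _
          _ = T (t * S ((ℛ K h).left j)) • (1 : B) := hfa
      rw [hK, smul_mul_assoc, one_mul, ht (S ((ℛ K h).left j)), map_smul, smul_eq_mul,
        hTt, mul_one]
      rw [hS]
      rw [_root_.counit_antipode]
    rw [Finset.sum_congr rfl step, _root_.sum_counit_smul (ℛ K h)]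
  rw [← Pl_apply h]
  exact goal1

end Aux7

/-- for `H` finite-dimensional, `T` a left integral in `H*` and `t` a
right integral in `H` with `T(t) = 1`, one has `t₁T(t₂S(h)) = h` for all `h`. -/
theorem integral_antipode_formula'
    {k : Type*} [Field k] {H : Type*} [Ring H] [HopfAlgebra k H]
    [Module.Finite k H]
    (T : H →ₗ[k] k) (t : H) (hT : IsLeftIntegralDual T)
    (ht : IsRightIntegral (k := k) t) (hTt : T t = 1) (h : H) :
    (TensorProduct.rid k H)
      (TensorProduct.map LinearMap.id
        (T ∘ₗ LinearMap.mulRight k (HopfAlgebra.antipode (R := k) h))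
        (Coalgebra.comul (R := k) t)) = h := by
  rw [← (Coalgebra.Repr.arbitrary k t).eq, map_sum, map_sum]
  have key : ∀ i ∈ (Coalgebra.Repr.arbitrary k t).index,
      (TensorProduct.rid k H) (TensorProduct.map LinearMap.id
        (T ∘ₗ LinearMap.mulRight k (HopfAlgebra.antipode (R := k) h))
        ((Coalgebra.Repr.arbitrary k t).left i ⊗ₜ[k] (Coalgebra.Repr.arbitrary k t).right i))
      = T ((Coalgebra.Repr.arbitrary k t).right i * HopfAlgebra.antipode (R := k) h) •
          (Coalgebra.Repr.arbitrary k t).left i := by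
    intro i _
    simp [TensorProduct.map_tmul, TensorProduct.rid_tmul, LinearMap.mulRight_apply]
  rw [Finset.sum_congr rfl key]
  exact main_formula hT ht hTt (Coalgebra.Repr.arbitrary k t) h

end
end
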